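/- Let p, ρ ∈ (0, 1], σ > 0, ω̄ > 0 and V > 0 be constants. On a probability space with a filtration (ℱ_t)_{t≥0}, let (Q_t), (H_t), (ω_t) be real-valued processes such that Q_t, H_t and ω_{t+1} are ℱ_t-measurable for each t, Q_0 is square-integrable, H_0 = 0, H_t ≥ 0, each ω_t is nonnegative and integrable with E[ω_t] = ω̄, ω_{t+1} is independent of Q_t, and ω_{t+1}·Q_t² is integrable for each t. For each t, let S_t be a {0,1}-valued random variable independent of ℱ_t with P(S_t = 1) = p, and let A_t be a square-integrable random variable independent of the σ-algebra generated by ℱ_t and S_t, with E[A_t] = 0 and E[A_t²] = σ². Define the update index J_t = (ω_{t+1} − ω̄ + ω̄/(p·ρ))·p·Q_t², the decision U_t = 1 if J_t > V·H_t and U_t = 0 otherwise, and the dynamics Q_{t+1} = (1 − U_t·S_t)·Q_t + A_t and H_{t+1} = max(H_t − ρ + U_t, 0). Then (i) limsup_{T→∞} (1/T)·∑_{t=0}^{T−1} E[U_t] ≤ ρ, and (ii) limsup_{T→∞} (1/T)·∑_{t=0}^{T−1} E[ω_{t+1}·Q_{t+1}²] ≤ ω̄·σ²/(p·ρ) + V/2.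 -/

import Mathlib

open MeasureTheory ProbabilityTheory Filter

section UoIHelpers

variable {Ω : Type*} {m0 : MeasurableSpace Ω} {μ : Measure Ω}

lemma UoI_indepFun_of_indep {m1 m2 : MeasurableSpace Ω} (h : Indep m1 m2 μ)
    {f g : Ω → ℝ} (hf : Measurable[m1] f) (hg : Measurable[m2] g) : IndepFun f g μ := by
  rw [IndepFun_iff_Indep]
  exact indep_of_indep_of_le_right (indep_of_indep_of_le_left h hf.comap_le) hg.comap_le

lemma UoI_integral_mul {m1 m2 : MeasurableSpace Ω} (h : Indep m1 m2 μ)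
    (h1 : m1 ≤ m0) (h2 : m2 ≤ m0)
    {f g : Ω → ℝ} (hf : Measurable[m1] f) (hg : Measurable[m2] g) :
    ∫ x, f x * g x ∂μ = (∫ x, f x ∂μ) * ∫ x, g x ∂μ :=
  (UoI_indepFun_of_indep h hf hg).integral_fun_mul_eq_mul_integral
    ((hf.mono h1 le_rfl).aestronglyMeasurable) ((hg.mono h2 le_rfl).aestronglyMeasurable)

lemma UoI_limsup_le {f g : ℕ → ℝ} {c : ℝ} (hf0 : ∀ T, 0 ≤ f T)
    (hfg : ∀ T, 1 ≤ T → f T ≤ g T) (hg : Tendsto g atTop (nhds c)) :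
    limsup f atTop ≤ c := by
  have h1 : limsup f atTop ≤ limsup g atTop := by
    apply limsup_le_limsup
    · filter_upwards [eventually_ge_atTop 1] with T hT using hfg T hT
    · refine IsBoundedUnder.isCoboundedUnder_le ⟨0, ?_⟩
      exact eventually_map.mpr (Filter.Eventually.of_forall fun T => hf0 T)
    · exact hg.isBoundedUnder_le
  rwa [hg.limsup_eq] at h1

lemma UoI_le_of_forall_pos {a b : ℝ} (h : ∀ ε : ℝ, 0 < ε → a ≤ b + ε) : a ≤ b := by
  by_contra hc
  push_neg at hc
  have := h ((a - b) / 2) (by linarith)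
  linarith

end UoIHelpers

set_option maxHeartbeats 2000000 in
/-- Theorem 1: under the update-index-based threshold scheme (transmit iff
`J t > V·H t`, with update index `J t = (ω (t+1) − ω̄ + ω̄/(p·ρ))·p·(Q t)²` and
virtual queue `H (t+1) = max (H t − ρ + U t) 0`), the average updating frequency
constraint `limsup (1/T) ∑ E[U t] ≤ ρ` is satisfied, and the average UoI obeys
`limsup (1/T) ∑ E[ω (t+1)·(Q (t+1))²] ≤ ω̄·σ²/(p·ρ) + V/2`. -/
theorem single_terminal_UoI_bound {Ω : Type*} {m0 : MeasurableSpace Ω}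
    (μ : Measure Ω) [IsProbabilityMeasure μ]
    (ℱ : Filtration ℕ m0)
    (p ρ σ wbar V : ℝ)
    (hp : p ∈ Set.Ioc (0 : ℝ) 1) (hρ : ρ ∈ Set.Ioc (0 : ℝ) 1)
    (hσ : 0 < σ) (hwbar : 0 < wbar) (hV : 0 < V)
    (Q H w S A U J : ℕ → Ω → ℝ)
    (hQmeas : ∀ t, Measurable[ℱ t] (Q t))
    (hHmeas : ∀ t, Measurable[ℱ t] (H t))
    (hwmeas : ∀ t, Measurable[ℱ t] (w (t + 1)))
    (hQ0 : MemLp (Q 0) 2 μ)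
    (hH0 : ∀ x, H 0 x = 0)
    (hHpos : ∀ t x, 0 ≤ H t x)
    (hwpos : ∀ t x, 0 ≤ w t x)
    (hwint : ∀ t, Integrable (w t) μ)
    (hwmean : ∀ t, (∫ x, w t x ∂μ) = wbar)
    (hwQindep : ∀ t, IndepFun (w (t + 1)) (Q t) μ)
    (hwQint : ∀ t, Integrable (fun x => w (t + 1) x * Q t x ^ 2) μ)
    (hSmeas : ∀ t, Measurable (S t))
    (hS01 : ∀ t x, S t x = 0 ∨ S t x = 1)
    (hSindep : ∀ t, Indep (ℱ t) (MeasurableSpace.comap (S t) inferInstance) μ)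
    (hSp : ∀ t, μ {x | S t x = 1} = ENNReal.ofReal p)
    (hAmeas : ∀ t, Measurable (A t)) (hA2 : ∀ t, MemLp (A t) 2 μ)
    (hAindep : ∀ t, Indep (ℱ t ⊔ MeasurableSpace.comap (S t) inferInstance)
        (MeasurableSpace.comap (A t) inferInstance) μ)
    (hAmean : ∀ t, (∫ x, A t x ∂μ) = 0)
    (hAvar : ∀ t, (∫ x, A t x ^ 2 ∂μ) = σ ^ 2)
    (hJ : ∀ t x, J t x = (w (t + 1) x - wbar + wbar / (p * ρ)) * p * Q t x ^ 2)
    (hU : ∀ t x, U t x = if J t x > V * H t x then (1 : ℝ) else 0)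
    (hQdyn : ∀ t x, Q (t + 1) x = (1 - U t x * S t x) * Q t x + A t x)
    (hHdyn : ∀ t x, H (t + 1) x = max (H t x - ρ + U t x) 0) :
    limsup (fun T : ℕ => (1 / (T : ℝ)) * ∑ t ∈ Finset.range T, ∫ x, U t x ∂μ) atTop
        ≤ ρ
    ∧ limsup (fun T : ℕ => (1 / (T : ℝ)) *
          ∑ t ∈ Finset.range T, ∫ x, w (t + 1) x * Q (t + 1) x ^ 2 ∂μ) atTop
        ≤ wbar * σ ^ 2 / (p * ρ) + V / 2 := by
  obtain ⟨hp0, hp1⟩ := hp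
  obtain ⟨hρ0, hρ1⟩ := hρ
  have hpρ : 0 < p * ρ := mul_pos hp0 hρ0
  have hpρ1 : p * ρ ≤ 1 := by nlinarith
  obtain ⟨B, hB⟩ : ∃ B : ℝ, B = wbar / (p * ρ) - wbar := ⟨_, rfl⟩
  have hB0 : 0 ≤ B := by
    have h1 : wbar ≤ wbar / (p * ρ) := by
      rw [le_div_iff₀ hpρ]; nlinarith
    rw [hB]; linarith
  obtain ⟨K, hK⟩ : ∃ K : ℝ, K = wbar * σ ^ 2 / (p * ρ) + V / 2 := ⟨_, rfl⟩
  have hK0 : 0 < K := by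
    have : 0 < wbar * σ ^ 2 / (p * ρ) := by positivity
    rw [hK]; linarith
  -- measurability
  have hQm : ∀ t, Measurable (Q t) := fun t => (hQmeas t).mono (ℱ.le t) le_rfl
  have hHm : ∀ t, Measurable (H t) := fun t => (hHmeas t).mono (ℱ.le t) le_rfl
  have hwm : ∀ t, Measurable (w (t + 1)) := fun t => (hwmeas t).mono (ℱ.le t) le_rfl
  have hJF : ∀ t, Measurable[ℱ t] (J t) := by
    intro t
    have he : J t = fun x => (w (t + 1) x - wbar + wbar / (p * ρ)) * p * Q t x ^ 2 :=
      funext (hJ t)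
    rw [he]
    exact ((((hwmeas t).sub measurable_const).add measurable_const).mul
      measurable_const).mul ((hQmeas t).pow_const 2)
  have hUF : ∀ t, Measurable[ℱ t] (U t) := by
    intro t
    have hset : MeasurableSet[ℱ t] {x | V * H t x < J t x} :=
      measurableSet_lt (measurable_const.mul (hHmeas t)) (hJF t)
    have he : U t = fun x => if V * H t x < J t x then (1 : ℝ) else 0 := by
      funext x; rw [hU t x]
    rw [he]
    exact Measurable.ite hset measurable_const measurable_const
  have hUm : ∀ t, Measurable (U t) := fun t => (hUF t).mono (ℱ.le t) le_rfl
  have hJm : ∀ t, Measurable (J t) := fun t => (hJF t).mono (ℱ.le t) le_rfl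
  have hU01 : ∀ t x, U t x = 0 ∨ U t x = 1 := by
    intro t x
    rw [hU t x]
    by_cases h : J t x > V * H t x
    · right; simp [h]
    · left; simp [h]
  have hU0 : ∀ t x, 0 ≤ U t x := by
    intro t x; rcases hU01 t x with h | h <;> rw [h] <;> norm_num
  have hU1 : ∀ t x, U t x ≤ 1 := by
    intro t x; rcases hU01 t x with h | h <;> rw [h] <;> norm_num
  have hS0 : ∀ t x, 0 ≤ S t x := by
    intro t x; rcases hS01 t x with h | h <;> rw [h] <;> norm_num
  have hS1 : ∀ t x, S t x ≤ 1 := by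
    intro t x; rcases hS01 t x with h | h <;> rw [h] <;> norm_num
  -- L² and integrability
  have hQL2 : ∀ t, MemLp (Q t) 2 μ := by
    intro t
    induction t with
    | zero => exact hQ0
    | succ t ih =>
      have h1 : MemLp (fun x => (1 - U t x * S t x) * Q t x) 2 μ := by
        refine MemLp.mono ih ?_ (ae_of_all _ fun x => ?_)
        · exact ((measurable_const.sub ((hUm t).mul (hSmeas t))).mul
            (hQm t)).aestronglyMeasurable
        · have h01 : 1 - U t x * S t x = 0 ∨ 1 - U t x * S t x = 1 := by
            rcases hU01 t x with h | h <;> rcases hS01 t x with h' | h' <;>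
              rw [h, h'] <;> norm_num
          rw [norm_mul]
          rcases h01 with h | h <;> rw [h] <;> simp [norm_nonneg]
      have h2 := h1.add (hA2 t)
      have he : Q (t + 1) = fun x => (1 - U t x * S t x) * Q t x + A t x := funext (hQdyn t)
      rwa [he]
  have hQ2int : ∀ t, Integrable (fun x => Q t x ^ 2) μ := fun t => (hQL2 t).integrable_sq
  have hAint : ∀ t, Integrable (A t) μ := fun t => (hA2 t).integrable one_le_two
  have hA2int : ∀ t, Integrable (fun x => A t x ^ 2) μ := fun t => (hA2 t).integrable_sq
  have hHle : ∀ t x, H t x ≤ t := by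
    intro t
    induction t with
    | zero => intro x; rw [hH0 x]; norm_num
    | succ t ih =>
      intro x
      rw [hHdyn t x]
      have h1 := ih x
      have h2 := hU1 t x
      apply max_le
      · push_cast; linarith
      · positivity
  have hHint : ∀ t, Integrable (H t) μ := by
    intro t
    refine (integrable_const (t : ℝ)).mono' (hHm t).aestronglyMeasurable
      (ae_of_all _ fun x => ?_)
    rw [Real.norm_eq_abs, abs_of_nonneg (hHpos t x)]
    exact hHle t x
  have hH2int : ∀ t, Integrable (fun x => H t x ^ 2) μ := by
    intro t
    refine (integrable_const ((t : ℝ) ^ 2)).mono' ((hHm t).pow_const 2).aestronglyMeasurable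
      (ae_of_all _ fun x => ?_)
    rw [Real.norm_eq_abs, abs_of_nonneg (sq_nonneg _)]
    have h1 := hHpos t x
    have h2 := hHle t x
    nlinarith
  have hUint : ∀ t, Integrable (U t) μ := by
    intro t
    refine (integrable_const (1 : ℝ)).mono' (hUm t).aestronglyMeasurable
      (ae_of_all _ fun x => ?_)
    rw [Real.norm_eq_abs, abs_of_nonneg (hU0 t x)]
    exact hU1 t x
  -- independence helpers
  have hScomap : ∀ t, Measurable[MeasurableSpace.comap (S t) inferInstance] (S t) :=
    fun t => Measurable.of_comap_le le_rfl
  have hSsub : ∀ t, MeasurableSpace.comap (S t) inferInstance ≤ m0 :=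
    fun t => (hSmeas t).comap_le
  have hAcomap : ∀ t, Measurable[MeasurableSpace.comap (A t) inferInstance] (A t) :=
    fun t => Measurable.of_comap_le le_rfl
  have hAsub : ∀ t, MeasurableSpace.comap (A t) inferInstance ≤ m0 :=
    fun t => (hAmeas t).comap_le
  have hsuple : ∀ t, ℱ t ⊔ MeasurableSpace.comap (S t) inferInstance ≤ m0 :=
    fun t => sup_le (ℱ.le t) (hSsub t)
  have hSmean : ∀ t, ∫ x, S t x ∂μ = p := by
    intro t
    have hms : MeasurableSet {x | S t x = 1} := (hSmeas t) (measurableSet_singleton 1)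
    have hind : S t = Set.indicator {x | S t x = 1} (fun _ => (1 : ℝ)) := by
      funext x
      rcases hS01 t x with h | h
      · have hx : x ∉ {x | S t x = 1} := by simp [h]
        simp [Set.indicator_of_notMem hx, h]
      · have hx : x ∈ {x | S t x = 1} := h
        simp [Set.indicator_of_mem hx, h]
    rw [hind, integral_indicator_const _ hms, measureReal_def, hSp t, smul_eq_mul, mul_one,
      ENNReal.toReal_ofReal hp0.le]
  have ES : ∀ t (f : Ω → ℝ), Measurable[ℱ t] f →
      ∫ x, f x * S t x ∂μ = (∫ x, f x ∂μ) * p := by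
    intro t f hf
    rw [UoI_integral_mul (hSindep t) (ℱ.le t) (hSsub t) hf (hScomap t), hSmean t]
  have EA : ∀ t (f : Ω → ℝ),
      Measurable[ℱ t ⊔ MeasurableSpace.comap (S t) inferInstance] f →
      ∫ x, f x * A t x ∂μ = 0 := by
    intro t f hf
    rw [UoI_integral_mul (hAindep t) (hsuple t) (hAsub t) hf (hAcomap t), hAmean t, mul_zero]
  have EA2 : ∀ t (f : Ω → ℝ),
      Measurable[ℱ t ⊔ MeasurableSpace.comap (S t) inferInstance] f →
      ∫ x, f x * A t x ^ 2 ∂μ = (∫ x, f x ∂μ) * σ ^ 2 := by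
    intro t f hf
    rw [UoI_integral_mul (hAindep t) (hsuple t) (hAsub t) hf ((hAcomap t).pow_const 2),
      hAvar t]
  have EwQ : ∀ t, ∫ x, w (t + 1) x * Q t x ^ 2 ∂μ = wbar * ∫ x, Q t x ^ 2 ∂μ := by
    intro t
    have hind : IndepFun (w (t + 1)) (fun x => Q t x ^ 2) μ :=
      (hwQindep t).comp measurable_id (measurable_id.pow_const 2)
    have h := hind.integral_fun_mul_eq_mul_integral (hwm t).aestronglyMeasurable
      ((hQm t).pow_const 2).aestronglyMeasurable
    rw [hwmean (t + 1)] at h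
    exact h
  -- the key one-step expansion
  have key : ∀ t (v : Ω → ℝ), Measurable[ℱ t] v → (∀ x, 0 ≤ v x) → Integrable v μ →
      Integrable (fun x => v x * Q t x ^ 2) μ →
      ∫ x, v x * Q (t + 1) x ^ 2 ∂μ
        = ∫ x, v x * Q t x ^ 2 ∂μ - (∫ x, v x * U t x * Q t x ^ 2 ∂μ) * p
          + (∫ x, v x ∂μ) * σ ^ 2 := by
    intro t v hvF hv0 hvint hvQint
    have hvm : Measurable v := hvF.mono (ℱ.le t) le_rfl
    have hpt : ∀ x, v x * Q (t + 1) x ^ 2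
        = v x * Q t x ^ 2 - (v x * U t x * Q t x ^ 2) * S t x
          + (2 * (v x * ((1 - U t x * S t x) * Q t x))) * A t x + v x * A t x ^ 2 := by
      intro x
      rw [hQdyn t x]
      have hus : U t x * S t x * (U t x * S t x) = U t x * S t x := by
        rcases hU01 t x with h | h <;> rcases hS01 t x with h' | h' <;> rw [h, h'] <;> ring
      linear_combination (v x * Q t x ^ 2) * hus
    have i1 : Integrable (fun x => v x * Q t x ^ 2) μ := hvQint
    have i2 : Integrable (fun x => (v x * U t x * Q t x ^ 2) * S t x) μ := by
      refine i1.mono' ((((hvm.mul (hUm t)).mul ((hQm t).pow_const 2)).mul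
        (hSmeas t)).aestronglyMeasurable) (ae_of_all _ fun x => ?_)
      have h1 := hv0 x
      have h2 := hU0 t x
      have h3 := hU1 t x
      have h4 := hS0 t x
      have h5 := hS1 t x
      have h6 : (0 : ℝ) ≤ Q t x ^ 2 := sq_nonneg _
      have hUS1 : U t x * S t x ≤ 1 := by nlinarith
      have hUS0 : 0 ≤ U t x * S t x := mul_nonneg h2 h4
      have hb := mul_le_of_le_one_right (mul_nonneg h1 h6) hUS1
      rw [Real.norm_eq_abs, abs_of_nonneg (by positivity)]
      nlinarith [hb]
    have i3' : Integrable (fun x => v x * ((1 - U t x * S t x) * Q t x)) μ := by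
      refine (hvint.add hvQint).mono' ((hvm.mul ((measurable_const.sub
        ((hUm t).mul (hSmeas t))).mul (hQm t))).aestronglyMeasurable)
        (ae_of_all _ fun x => ?_)
      have hg1 : |1 - U t x * S t x| ≤ 1 := by
        rcases hU01 t x with h | h <;> rcases hS01 t x with h' | h' <;>
          rw [h, h'] <;> norm_num
      have hq : |Q t x| ≤ 1 + Q t x ^ 2 := by
        nlinarith [sq_nonneg (|Q t x| - 1), sq_abs (Q t x), abs_nonneg (Q t x)]
      show ‖v x * ((1 - U t x * S t x) * Q t x)‖ ≤ v x + v x * Q t x ^ 2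
      rw [Real.norm_eq_abs, abs_mul, abs_mul, abs_of_nonneg (hv0 x)]
      have h1 : |1 - U t x * S t x| * |Q t x| ≤ 1 * (1 + Q t x ^ 2) :=
        mul_le_mul hg1 hq (abs_nonneg _) one_pos.le
      have h2 : v x * (|1 - U t x * S t x| * |Q t x|) ≤ v x * (1 * (1 + Q t x ^ 2)) :=
        mul_le_mul_of_nonneg_left h1 (hv0 x)
      nlinarith [h2]
    have hUSmeas : Measurable[ℱ t ⊔ MeasurableSpace.comap (S t) inferInstance]
        fun x => 1 - U t x * S t x :=
      measurable_const.sub (((hUF t).mono le_sup_left le_rfl).mul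
        ((hScomap t).mono le_sup_right le_rfl))
    have hf3meas : Measurable[ℱ t ⊔ MeasurableSpace.comap (S t) inferInstance]
        fun x => 2 * (v x * ((1 - U t x * S t x) * Q t x)) :=
      measurable_const.mul ((hvF.mono le_sup_left le_rfl).mul
        (hUSmeas.mul ((hQmeas t).mono le_sup_left le_rfl)))
    have i3 : Integrable (fun x => (2 * (v x * ((1 - U t x * S t x) * Q t x))) * A t x) μ := by
      have hind : IndepFun (fun x => 2 * (v x * ((1 - U t x * S t x) * Q t x))) (A t) μ :=
        UoI_indepFun_of_indep (hAindep t) hf3meas (hAcomap t)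
      exact hind.integrable_mul (i3'.const_mul 2) (hAint t)
    have i4 : Integrable (fun x => v x * A t x ^ 2) μ := by
      have hind : IndepFun v (fun x => A t x ^ 2) μ :=
        UoI_indepFun_of_indep (hAindep t) (hvF.mono le_sup_left le_rfl)
          ((hAcomap t).pow_const 2)
      exact hind.integrable_mul hvint (hA2int t)
    have he : (fun x => v x * Q (t + 1) x ^ 2)
        = fun x => v x * Q t x ^ 2 - (v x * U t x * Q t x ^ 2) * S t x
          + (2 * (v x * ((1 - U t x * S t x) * Q t x))) * A t x + v x * A t x ^ 2 :=
      funext hpt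
    have e2 : ∫ x, (v x * U t x * Q t x ^ 2) * S t x ∂μ
        = (∫ x, v x * U t x * Q t x ^ 2 ∂μ) * p :=
      ES t _ ((hvF.mul (hUF t)).mul ((hQmeas t).pow_const 2))
    have e3 : ∫ x, (2 * (v x * ((1 - U t x * S t x) * Q t x))) * A t x ∂μ = 0 :=
      EA t _ hf3meas
    have e4 : ∫ x, v x * A t x ^ 2 ∂μ = (∫ x, v x ∂μ) * σ ^ 2 :=
      EA2 t v (hvF.mono le_sup_left le_rfl)
    calc ∫ x, v x * Q (t + 1) x ^ 2 ∂μ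
        = ∫ x, (v x * Q t x ^ 2 - (v x * U t x * Q t x ^ 2) * S t x
            + (2 * (v x * ((1 - U t x * S t x) * Q t x))) * A t x + v x * A t x ^ 2) ∂μ := by
          rw [he]
      _ = (∫ x, v x * Q t x ^ 2 ∂μ) - (∫ x, (v x * U t x * Q t x ^ 2) * S t x ∂μ)
            + (∫ x, (2 * (v x * ((1 - U t x * S t x) * Q t x))) * A t x ∂μ)
            + ∫ x, v x * A t x ^ 2 ∂μ := by
          have q1 : ∫ x, (v x * Q t x ^ 2 - (v x * U t x * Q t x ^ 2) * S t x
                + (2 * (v x * ((1 - U t x * S t x) * Q t x))) * A t x + v x * A t x ^ 2) ∂μ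
              = (∫ x, (v x * Q t x ^ 2 - (v x * U t x * Q t x ^ 2) * S t x
                + (2 * (v x * ((1 - U t x * S t x) * Q t x))) * A t x) ∂μ)
                + ∫ x, v x * A t x ^ 2 ∂μ :=
            integral_add ((i1.sub i2).add i3) i4
          have q2 : ∫ x, (v x * Q t x ^ 2 - (v x * U t x * Q t x ^ 2) * S t x
                + (2 * (v x * ((1 - U t x * S t x) * Q t x))) * A t x) ∂μ
              = (∫ x, (v x * Q t x ^ 2 - (v x * U t x * Q t x ^ 2) * S t x) ∂μ)
                + ∫ x, (2 * (v x * ((1 - U t x * S t x) * Q t x))) * A t x ∂μ :=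
            integral_add (i1.sub i2) i3
          have q3 : ∫ x, (v x * Q t x ^ 2 - (v x * U t x * Q t x ^ 2) * S t x) ∂μ
              = (∫ x, v x * Q t x ^ 2 ∂μ) - ∫ x, (v x * U t x * Q t x ^ 2) * S t x ∂μ :=
            integral_sub i1 i2
          rw [q1, q2, q3]
      _ = ∫ x, v x * Q t x ^ 2 ∂μ - (∫ x, v x * U t x * Q t x ^ 2 ∂μ) * p
            + (∫ x, v x ∂μ) * σ ^ 2 := by
          rw [e2, e3, e4]; ring
  -- one-step facts
  have fact1 : ∀ t, ∫ x, Q (t + 1) x ^ 2 ∂μ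
      = (∫ x, Q t x ^ 2 ∂μ) - (∫ x, U t x * Q t x ^ 2 ∂μ) * p + σ ^ 2 := by
    intro t
    have h := key t (fun _ => (1 : ℝ)) measurable_const (fun _ => zero_le_one)
      (integrable_const 1) (by simpa using hQ2int t)
    simpa using h
  have fact2 : ∀ t, ∫ x, w (t + 1) x * Q (t + 1) x ^ 2 ∂μ
      = wbar * (∫ x, Q t x ^ 2 ∂μ)
        - (∫ x, w (t + 1) x * U t x * Q t x ^ 2 ∂μ) * p + wbar * σ ^ 2 := by
    intro t
    have h := key t (w (t + 1)) (hwmeas t) (fun x => hwpos _ x) (hwint (t + 1)) (hwQint t)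
    rw [EwQ t, hwmean (t + 1)] at h
    exact h
  -- integrability of J-terms
  have hJeq : ∀ t x, J t x = p * (w (t + 1) x * Q t x ^ 2) + p * B * Q t x ^ 2 := by
    intro t x
    rw [hJ t x, hB]
    ring
  have hJint : ∀ t, Integrable (J t) μ := by
    intro t
    have he : J t = fun x => p * (w (t + 1) x * Q t x ^ 2) + p * B * Q t x ^ 2 :=
      funext (hJeq t)
    rw [he]
    exact ((hwQint t).const_mul p).add ((hQ2int t).const_mul (p * B))
  have hwUQint : ∀ t, Integrable (fun x => w (t + 1) x * U t x * Q t x ^ 2) μ := by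
    intro t
    refine (hwQint t).mono' (((hwm t).mul (hUm t)).mul
      ((hQm t).pow_const 2)).aestronglyMeasurable (ae_of_all _ fun x => ?_)
    have h1 := hwpos (t + 1) x
    have h2 := hU0 t x
    have h3 := hU1 t x
    have h6 : (0 : ℝ) ≤ Q t x ^ 2 := sq_nonneg _
    have hb := mul_le_of_le_one_right (mul_nonneg h1 h6) h3
    rw [Real.norm_eq_abs, abs_of_nonneg (by positivity)]
    nlinarith [hb]
  have hUQint : ∀ t, Integrable (fun x => U t x * Q t x ^ 2) μ := by
    intro t
    refine (hQ2int t).mono' ((hUm t).mul ((hQm t).pow_const 2)).aestronglyMeasurable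
      (ae_of_all _ fun x => ?_)
    have h2 := hU0 t x
    have h3 := hU1 t x
    have h6 : (0 : ℝ) ≤ Q t x ^ 2 := sq_nonneg _
    have hb := mul_le_of_le_one_right h6 h3
    rw [Real.norm_eq_abs, abs_of_nonneg (by positivity)]
    nlinarith [hb]
  have hJUint : ∀ t, Integrable (fun x => J t x * U t x) μ := by
    intro t
    have he : (fun x => J t x * U t x)
        = fun x => p * (w (t + 1) x * U t x * Q t x ^ 2) + p * B * (U t x * Q t x ^ 2) := by
      funext x; rw [hJeq t x]; ring
    rw [he]
    exact ((hwUQint t).const_mul p).add ((hUQint t).const_mul (p * B))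
  have eJU : ∀ t, ∫ x, J t x * U t x ∂μ
      = p * (∫ x, w (t + 1) x * U t x * Q t x ^ 2 ∂μ)
        + p * B * (∫ x, U t x * Q t x ^ 2 ∂μ) := by
    intro t
    have he : (fun x => J t x * U t x)
        = fun x => p * (w (t + 1) x * U t x * Q t x ^ 2) + p * B * (U t x * Q t x ^ 2) := by
      funext x; rw [hJeq t x]; ring
    rw [he, integral_add ((hwUQint t).const_mul p) ((hUQint t).const_mul (p * B)),
      integral_const_mul, integral_const_mul]
  have eJ : ∀ t, ∫ x, J t x ∂μ
      = p * (wbar * ∫ x, Q t x ^ 2 ∂μ) + p * B * ∫ x, Q t x ^ 2 ∂μ := by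
    intro t
    have he : J t = fun x => p * (w (t + 1) x * Q t x ^ 2) + p * B * Q t x ^ 2 :=
      funext (hJeq t)
    rw [he, integral_add ((hwQint t).const_mul p) ((hQ2int t).const_mul (p * B)),
      integral_const_mul, integral_const_mul, EwQ t]
  -- drift inequality
  have fact3 : ∀ t, V / 2 * (∫ x, H (t + 1) x ^ 2 ∂μ)
      ≤ V / 2 * (∫ x, H t x ^ 2 ∂μ) + V / 2
        + ((∫ x, J t x * U t x ∂μ) - ρ * ∫ x, J t x ∂μ) := by
    intro t
    have hptw : ∀ x, V / 2 * H (t + 1) x ^ 2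
        ≤ V / 2 * H t x ^ 2 + V / 2 + J t x * (U t x - ρ) := by
      intro x
      have hmax : H (t + 1) x ^ 2 ≤ (H t x - ρ + U t x) ^ 2 := by
        rw [hHdyn t x]
        rcases le_or_gt 0 (H t x - ρ + U t x) with h | h
        · rw [max_eq_left h]
        · rw [max_eq_right h.le]
          simpa using sq_nonneg (H t x - ρ + U t x)
      have hUρ : (U t x - ρ) ^ 2 ≤ 1 := by
        rcases hU01 t x with h | h <;> rw [h] <;> nlinarith
      have hkey : V * H t x * (U t x - ρ) ≤ J t x * (U t x - ρ) := by
        by_cases hcnd : J t x > V * H t x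
        · have hu1 : U t x = 1 := by rw [hU t x, if_pos hcnd]
          rw [hu1]
          nlinarith [mul_nonneg (sub_pos.mpr hcnd).le (sub_nonneg.mpr hρ1)]
        · have hu0 : U t x = 0 := by rw [hU t x, if_neg hcnd]
          push_neg at hcnd
          rw [hu0]
          nlinarith [mul_nonneg (sub_nonneg.mpr hcnd) hρ0.le]
      have h1 : V / 2 * H (t + 1) x ^ 2 ≤ V / 2 * (H t x - ρ + U t x) ^ 2 :=
        mul_le_mul_of_nonneg_left hmax (by positivity)
      have h2 : V / 2 * (H t x - ρ + U t x) ^ 2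
          = V / 2 * H t x ^ 2 + V / 2 * (U t x - ρ) ^ 2 + V * H t x * (U t x - ρ) := by
        ring
      have h3 : V / 2 * (U t x - ρ) ^ 2 ≤ V / 2 :=
        (mul_le_mul_of_nonneg_left hUρ (by positivity)).trans_eq (mul_one _)
      linarith
    have hJUρint : Integrable (fun x => J t x * (U t x - ρ)) μ := by
      have he : (fun x => J t x * (U t x - ρ)) = fun x => J t x * U t x - ρ * J t x := by
        funext x; ring
      rw [he]
      exact (hJUint t).sub ((hJint t).const_mul ρ)
    have hint : ∫ x, V / 2 * H (t + 1) x ^ 2 ∂μ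
        ≤ ∫ x, (V / 2 * H t x ^ 2 + V / 2 + J t x * (U t x - ρ)) ∂μ := by
      refine integral_mono ((hH2int (t + 1)).const_mul _) ?_ hptw
      exact (((hH2int t).const_mul _).add (integrable_const _)).add hJUρint
    have q1 : ∫ x, (V / 2 * H t x ^ 2 + V / 2 + J t x * (U t x - ρ)) ∂μ
        = (∫ x, (V / 2 * H t x ^ 2 + V / 2) ∂μ) + ∫ x, J t x * (U t x - ρ) ∂μ :=
      integral_add (((hH2int t).const_mul _).add (integrable_const _)) hJUρint
    have q2 : ∫ x, (V / 2 * H t x ^ 2 + V / 2) ∂μ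
        = (∫ x, V / 2 * H t x ^ 2 ∂μ) + ∫ _x, (V / 2 : ℝ) ∂μ :=
      integral_add ((hH2int t).const_mul _) (integrable_const _)
    rw [q1, q2, integral_const_mul, integral_const_mul, integral_const] at hint
    simp only [measure_univ, probReal_univ, ENNReal.toReal_one, smul_eq_mul, one_mul] at hint
    have hJUρ : ∫ x, J t x * (U t x - ρ) ∂μ
        = (∫ x, J t x * U t x ∂μ) - ρ * ∫ x, J t x ∂μ := by
      have he : (fun x => J t x * (U t x - ρ)) = fun x => J t x * U t x - ρ * J t x := by
        funext x; ring
      rw [he, integral_sub (hJUint t) ((hJint t).const_mul ρ), integral_const_mul]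
    rw [hJUρ] at hint
    linarith
  -- combined per-step inequality
  have step : ∀ t, (∫ x, w (t + 1) x * Q (t + 1) x ^ 2 ∂μ)
      + B * ((∫ x, Q (t + 1) x ^ 2 ∂μ) - ∫ x, Q t x ^ 2 ∂μ)
      + V / 2 * ((∫ x, H (t + 1) x ^ 2 ∂μ) - ∫ x, H t x ^ 2 ∂μ) ≤ K := by
    intro t
    have h1 := fact1 t
    have h2 := fact2 t
    have h3 := fact3 t
    rw [eJU t, eJ t] at h3
    have hcancel : ρ * (p * (wbar * ∫ x, Q t x ^ 2 ∂μ) + p * B * ∫ x, Q t x ^ 2 ∂μ)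
        = wbar * ∫ x, Q t x ^ 2 ∂μ := by
      rw [hB]
      field_simp
      ring
    rw [hcancel] at h3
    have h1' : B * ((∫ x, Q (t + 1) x ^ 2 ∂μ) - ∫ x, Q t x ^ 2 ∂μ)
        = B * σ ^ 2 - B * ((∫ x, U t x * Q t x ^ 2 ∂μ) * p) := by
      rw [h1]; ring
    have hKe : K = wbar * σ ^ 2 + B * σ ^ 2 + V / 2 := by
      rw [hK, hB]
      field_simp
      ring
    linarith
  -- telescoping
  have hsq0 : ∫ x, H 0 x ^ 2 ∂μ = 0 := by
    have he : (fun x => H 0 x ^ 2) = fun _ : Ω => (0 : ℝ) := by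
      funext x; rw [hH0 x]; ring
    rw [he, integral_zero]
  have tele : ∀ T : ℕ, (∑ t ∈ Finset.range T, ∫ x, w (t + 1) x * Q (t + 1) x ^ 2 ∂μ)
      + B * (∫ x, Q T x ^ 2 ∂μ) + V / 2 * (∫ x, H T x ^ 2 ∂μ)
      ≤ T * K + B * ∫ x, Q 0 x ^ 2 ∂μ := by
    intro T
    induction T with
    | zero =>
      simp only [Finset.range_zero, Finset.sum_empty, Nat.cast_zero, zero_mul, zero_add,
        hsq0, mul_zero, add_zero]
      exact le_refl _
    | succ T ih =>
      have hstep := step T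
      rw [Finset.sum_range_succ]
      push_cast
      linarith
  -- nonnegativity
  have ha0 : ∀ t : ℕ, 0 ≤ ∫ x, Q t x ^ 2 ∂μ :=
    fun t => integral_nonneg fun x => sq_nonneg _
  have hc0 : ∀ t : ℕ, 0 ≤ ∫ x, w (t + 1) x * Q (t + 1) x ^ 2 ∂μ :=
    fun t => integral_nonneg fun x => mul_nonneg (hwpos _ x) (sq_nonneg _)
  have hh0 : ∀ t : ℕ, 0 ≤ ∫ x, H t x ^ 2 ∂μ :=
    fun t => integral_nonneg fun x => sq_nonneg _
  have hu0i : ∀ t : ℕ, 0 ≤ ∫ x, U t x ∂μ := fun t => integral_nonneg fun x => hU0 t x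
  have hBa0 : 0 ≤ B * ∫ x, Q 0 x ^ 2 ∂μ := mul_nonneg hB0 (ha0 0)
  -- part (ii)
  have part2 : limsup (fun T : ℕ => (1 / (T : ℝ)) *
      ∑ t ∈ Finset.range T, ∫ x, w (t + 1) x * Q (t + 1) x ^ 2 ∂μ) atTop ≤ K := by
    refine UoI_limsup_le (g := fun T : ℕ => K + (B * ∫ x, Q 0 x ^ 2 ∂μ) / T)
      (fun T => mul_nonneg (by positivity) (Finset.sum_nonneg fun t _ => hc0 t))
      (fun T hT => ?_) ?_
    · have hT0 : (0 : ℝ) < T := by exact_mod_cast hT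
      have hTne : (T : ℝ) ≠ 0 := hT0.ne'
      have hsum : ∑ t ∈ Finset.range T, ∫ x, w (t + 1) x * Q (t + 1) x ^ 2 ∂μ
          ≤ T * K + B * ∫ x, Q 0 x ^ 2 ∂μ := by
        have h := tele T
        have hx : 0 ≤ B * ∫ x, Q T x ^ 2 ∂μ := mul_nonneg hB0 (ha0 T)
        have hy : 0 ≤ V / 2 * ∫ x, H T x ^ 2 ∂μ := mul_nonneg (by positivity) (hh0 T)
        linarith
      have hle : (1 / (T : ℝ)) * ∑ t ∈ Finset.range T, ∫ x, w (t + 1) x * Q (t + 1) x ^ 2 ∂μ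
          ≤ (1 / (T : ℝ)) * ((T : ℝ) * K + B * ∫ x, Q 0 x ^ 2 ∂μ) :=
        mul_le_mul_of_nonneg_left hsum (by positivity)
      have heq : (1 / (T : ℝ)) * ((T : ℝ) * K + B * ∫ x, Q 0 x ^ 2 ∂μ)
          = K + (B * ∫ x, Q 0 x ^ 2 ∂μ) / T := by
        field_simp
      linarith
    · have h0 : Tendsto (fun T : ℕ => (B * ∫ x, Q 0 x ^ 2 ∂μ) / (T : ℝ)) atTop (nhds 0) :=
        tendsto_const_div_atTop_nhds_zero_nat _
      simpa using (tendsto_const_nhds (x := K)).add h0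
  -- part (i)
  have hHsum : ∀ T : ℕ, (∑ t ∈ Finset.range T, ∫ x, U t x ∂μ)
      ≤ ρ * T + ∫ x, H T x ∂μ := by
    intro T
    induction T with
    | zero =>
      simp only [Finset.range_zero, Finset.sum_empty, Nat.cast_zero, mul_zero, zero_add]
      have he : (fun x => H 0 x) = fun _ : Ω => (0 : ℝ) := funext hH0
      rw [he, integral_zero]
    | succ T ih =>
      have hpt : ∀ x, H T x - ρ + U T x ≤ H (T + 1) x := by
        intro x
        rw [hHdyn T x]
        exact le_max_left _ _
      have hint : ∫ x, (H T x - ρ + U T x) ∂μ ≤ ∫ x, H (T + 1) x ∂μ :=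
        integral_mono (((hHint T).sub (integrable_const ρ)).add (hUint T)) (hHint (T + 1)) hpt
      have heq : ∫ x, (H T x - ρ + U T x) ∂μ = (∫ x, H T x ∂μ) - ρ + ∫ x, U T x ∂μ := by
        have q1 : ∫ x, (H T x - ρ + U T x) ∂μ
            = (∫ x, (H T x - ρ) ∂μ) + ∫ x, U T x ∂μ :=
          integral_add ((hHint T).sub (integrable_const ρ)) (hUint T)
        have q2 : ∫ x, (H T x - ρ) ∂μ = (∫ x, H T x ∂μ) - ∫ _x, (ρ : ℝ) ∂μ :=
          integral_sub (hHint T) (integrable_const ρ)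
        rw [q1, q2, integral_const]
        simp only [measure_univ, probReal_univ, ENNReal.toReal_one, smul_eq_mul, one_mul]
      rw [Finset.sum_range_succ]
      push_cast
      linarith
  have hH2b : ∀ T : ℕ, V / 2 * (∫ x, H T x ^ 2 ∂μ) ≤ T * K + B * ∫ x, Q 0 x ^ 2 ∂μ := by
    intro T
    have h := tele T
    have hx : 0 ≤ B * ∫ x, Q T x ^ 2 ∂μ := mul_nonneg hB0 (ha0 T)
    have hz : 0 ≤ ∑ t ∈ Finset.range T, ∫ x, w (t + 1) x * Q (t + 1) x ^ 2 ∂μ :=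
      Finset.sum_nonneg fun t _ => hc0 t
    linarith
  have part1 : limsup (fun T : ℕ => (1 / (T : ℝ)) *
      ∑ t ∈ Finset.range T, ∫ x, U t x ∂μ) atTop ≤ ρ := by
    refine UoI_le_of_forall_pos fun ε hε => ?_
    obtain ⟨D, hD⟩ : ∃ D : ℝ, D = (K + B * ∫ x, Q 0 x ^ 2 ∂μ) / (V * ε) := ⟨_, rfl⟩
    have hD0 : 0 ≤ D := hD ▸ div_nonneg (by linarith [hBa0, hK0.le]) (mul_pos hV hε).le
    have hls : limsup (fun T : ℕ => (1 / (T : ℝ)) *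
        ∑ t ∈ Finset.range T, ∫ x, U t x ∂μ) atTop ≤ ρ + ε / 2 := by
      refine UoI_limsup_le (g := fun T : ℕ => ρ + ε / 2 + D / T)
        (fun T => mul_nonneg (by positivity) (Finset.sum_nonneg fun t _ => hu0i t))
        (fun T hT => ?_) ?_
      · have hT0 : (0 : ℝ) < T := by exact_mod_cast hT
        have hTne : (T : ℝ) ≠ 0 := hT0.ne'
        have hT1 : (1 : ℝ) ≤ T := by exact_mod_cast hT
        have hptw : ∀ x, H T x * (2 * ε * T) ≤ ε ^ 2 * (T : ℝ) ^ 2 + H T x ^ 2 := by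
          intro x
          nlinarith [sq_nonneg (H T x - ε * T)]
        have hintH : (∫ x, H T x ∂μ) * (2 * ε * T)
            ≤ ε ^ 2 * (T : ℝ) ^ 2 + ∫ x, H T x ^ 2 ∂μ := by
          have h : (∫ x, H T x * (2 * ε * T) ∂μ)
              ≤ ∫ x, (ε ^ 2 * (T : ℝ) ^ 2 + H T x ^ 2) ∂μ :=
            integral_mono ((hHint T).mul_const (2 * ε * T))
              ((integrable_const (ε ^ 2 * (T : ℝ) ^ 2)).add (hH2int T)) hptw
          have q1 : ∫ x, (ε ^ 2 * (T : ℝ) ^ 2 + H T x ^ 2) ∂μ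
              = (∫ _x, (ε ^ 2 * (T : ℝ) ^ 2 : ℝ) ∂μ) + ∫ x, H T x ^ 2 ∂μ :=
            integral_add (integrable_const _) (hH2int T)
          rw [integral_mul_const, q1, integral_const] at h
          simpa [measure_univ] using h
        have hsqb : ∫ x, H T x ^ 2 ∂μ ≤ 2 * (K + B * ∫ x, Q 0 x ^ 2 ∂μ) / V * T := by
          have h3 := hH2b T
          rw [div_mul_eq_mul_div, le_div_iff₀ hV]
          nlinarith [hBa0, hK0.le, hT1]
        have h6 : (∫ x, H T x ∂μ) * (2 * ε * T) ≤ (ε * T / 2 + D) * (2 * ε * T) := by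
          have he : (ε * (T : ℝ) / 2 + D) * (2 * ε * T)
              = ε ^ 2 * (T : ℝ) ^ 2 + 2 * (K + B * ∫ x, Q 0 x ^ 2 ∂μ) / V * T := by
            rw [hD]
            field_simp
          rw [he]
          linarith
        have h4 : ∫ x, H T x ∂μ ≤ ε * T / 2 + D :=
          le_of_mul_le_mul_right h6 (by positivity)
        have h7 : ∑ t ∈ Finset.range T, ∫ x, U t x ∂μ ≤ ρ * T + ε * T / 2 + D := by
          have := hHsum T
          linarith
        rw [one_div, inv_mul_le_iff₀ hT0]
        have he2 : (T : ℝ) * (ρ + ε / 2 + D / T) = ρ * T + ε * T / 2 + D := by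
          field_simp
        rw [he2]
        exact h7
      · have h0 : Tendsto (fun T : ℕ => D / (T : ℝ)) atTop (nhds 0) :=
          tendsto_const_div_atTop_nhds_zero_nat _
        simpa using (tendsto_const_nhds (x := ρ + ε / 2)).add h0
    linarith
  exact ⟨part1, hK ▸ part2⟩
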